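/- For a convex risk measure R with conjugate R* = Φ on the set {⟨p,1⟩ = 1} (and +∞ elsewhere), the functional R^ε(X) = inf_{λ>0}(λε + λR(X/λ)) has Fenchel conjugate (R^ε)*(p) = sup_{λ > 0} λ(R*(p) − ε); hence (R^ε)*(p) = 0 if R*(p) ≤ ε and +∞ otherwise. In particular the risk envelope of R^ε is {p : Φ(p) ≤ ε, E[p] = 1, p ≥ 0}. -/

import Mathlib

open MeasureTheory
noncomputable def oneLp {Θ : Type*} [MeasurableSpace Θ] (μ : Measure Θ)
    [IsFiniteMeasure μ] : Lp ℝ 2 μ :=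
  MemLp.toLp (fun _ => (1 : ℝ)) (memLp_const 1)

/-- The Fenchel conjugate `R*` of a real-valued functional on `L²(μ)`,
with pairing `⟨p,X⟩ = E[pX]`. -/
noncomputable def rStar {Θ : Type*} [MeasurableSpace Θ] (μ : Measure Θ)
    (R : Lp ℝ 2 μ → ℝ) (p : Lp ℝ 2 μ) : EReal :=
  ⨆ X : Lp ℝ 2 μ, ((∫ θ, p θ * X θ ∂μ - R X : ℝ) : EReal)

/-- `R^ε(X) = inf_{λ>0}(λε + λ R(X/λ))`. -/
noncomputable def rEps {Θ : Type*} [MeasurableSpace Θ] (μ : Measure Θ)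
    (R : Lp ℝ 2 μ → ℝ) (ε : ℝ) (X : Lp ℝ 2 μ) : EReal :=
  ⨅ l : {l : ℝ // 0 < l}, (((l : ℝ) * ε + (l : ℝ) * R (((l : ℝ))⁻¹ • X) : ℝ) : EReal)

/-- The Fenchel conjugate of `R^ε`. -/
noncomputable def rEpsStar {Θ : Type*} [MeasurableSpace Θ] (μ : Measure Θ)
    (R : Lp ℝ 2 μ → ℝ) (ε : ℝ) (p : Lp ℝ 2 μ) : EReal :=
  ⨆ X : Lp ℝ 2 μ, (((∫ θ, p θ * X θ ∂μ : ℝ) : EReal) - rEps μ R ε X)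

section Aux

variable {Θ : Type*} [MeasurableSpace Θ] {μ : Measure Θ}

/-- The pairing is homogeneous in the second argument. -/
lemma pairing_smul (p X : Lp ℝ 2 μ) (c : ℝ) :
    ∫ θ, p θ * ((c • X : Lp ℝ 2 μ) θ) ∂μ = c * ∫ θ, p θ * X θ ∂μ := by
  rw [← integral_const_mul]
  refine integral_congr_ae ?_
  filter_upwards [Lp.coeFn_smul c X] with θ hθ
  rw [hθ]
  simp only [Pi.smul_apply, smul_eq_mul]
  ring

/-- Core lower bound on `rEpsStar`. -/
lemma rEpsStar_ge (R : Lp ℝ 2 μ → ℝ) (ε : ℝ) (p Y : Lp ℝ 2 μ) {l : ℝ} (hl : 0 < l) :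
    ((l * ((∫ θ, p θ * Y θ ∂μ) - R Y - ε) : ℝ) : EReal) ≤ rEpsStar μ R ε p := by
  have h1 : rEps μ R ε (l • Y) ≤ ((l * ε + l * R Y : ℝ) : EReal) := by
    have h := iInf_le
      (fun l' : {l : ℝ // 0 < l} =>
        (((l' : ℝ) * ε + (l' : ℝ) * R (((l' : ℝ))⁻¹ • (l • Y)) : ℝ) : EReal)) ⟨l, hl⟩
    simpa [smul_smul, inv_mul_cancel₀ hl.ne', rEps] using h
  have h2 : ((l * ((∫ θ, p θ * Y θ ∂μ) - R Y - ε) : ℝ) : EReal)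
      ≤ ((∫ θ, p θ * ((l • Y : Lp ℝ 2 μ)) θ ∂μ : ℝ) : EReal) - rEps μ R ε (l • Y) := by
    rw [pairing_smul]
    calc ((l * ((∫ θ, p θ * Y θ ∂μ) - R Y - ε) : ℝ) : EReal)
        = ((l * ∫ θ, p θ * Y θ ∂μ : ℝ) : EReal) - ((l * ε + l * R Y : ℝ) : EReal) := by
          rw [← EReal.coe_sub]; norm_cast; ring
      _ ≤ ((l * ∫ θ, p θ * Y θ ∂μ : ℝ) : EReal) - rEps μ R ε (l • Y) :=
          EReal.sub_le_sub le_rfl h1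
  exact h2.trans (le_iSup (fun X : Lp ℝ 2 μ =>
    ((∫ θ, p θ * X θ ∂μ : ℝ) : EReal) - rEps μ R ε X) (l • Y))

lemma bot_lt_rEpsStar (R : Lp ℝ 2 μ → ℝ) (ε : ℝ) (p : Lp ℝ 2 μ) :
    (⊥ : EReal) < rEpsStar μ R ε p :=
  lt_of_lt_of_le (EReal.bot_lt_coe _) (rEpsStar_ge R ε p 0 one_pos)

lemma le_rStar (R : Lp ℝ 2 μ → ℝ) (p Y : Lp ℝ 2 μ) :
    ((∫ θ, p θ * Y θ ∂μ - R Y : ℝ) : EReal) ≤ rStar μ R p :=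
  le_iSup (fun X : Lp ℝ 2 μ => ((∫ θ, p θ * X θ ∂μ - R X : ℝ) : EReal)) Y

lemma rStar_ne_bot (R : Lp ℝ 2 μ → ℝ) (p : Lp ℝ 2 μ) : rStar μ R p ≠ ⊥ := by
  intro h
  have := le_rStar R p 0
  rw [h, le_bot_iff] at this
  exact EReal.coe_ne_bot _ this

end Aux

section Key

variable {Θ : Type*} [MeasurableSpace Θ] {μ : Measure Θ}

lemma rEpsStar_eq (R : Lp ℝ 2 μ → ℝ) (ε : ℝ) (p : Lp ℝ 2 μ) :
    rEpsStar μ R ε p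
      = ⨆ l : {l : ℝ // 0 < l}, (((l : ℝ) : EReal) * (rStar μ R p - (ε : EReal))) := by
  set S := rStar μ R p with hS
  set T := ⨆ l : {l : ℝ // 0 < l}, (((l : ℝ) : EReal) * (S - (ε : EReal))) with hT
  have hSbot : S ≠ ⊥ := rStar_ne_bot R p
  apply le_antisymm
  · -- rEpsStar ≤ T
    refine iSup_le fun X => ?_
    set a := ∫ θ, p θ * X θ ∂μ with ha
    set g : {l : ℝ // 0 < l} → ℝ :=
      fun l => (l : ℝ) * ε + (l : ℝ) * R (((l : ℝ))⁻¹ • X) with hg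
    have hbotT : (⊥ : EReal) < T := by
      have h0 : ((∫ θ, p θ * (0 : Lp ℝ 2 μ) θ ∂μ - R 0 - ε : ℝ) : EReal) ≤ S - (ε : EReal) := by
        rw [show ((∫ θ, p θ * (0 : Lp ℝ 2 μ) θ ∂μ - R 0 - ε : ℝ) : EReal)
            = ((∫ θ, p θ * (0 : Lp ℝ 2 μ) θ ∂μ - R 0 : ℝ) : EReal) - (ε : EReal) by
          rw [← EReal.coe_sub]]
        exact EReal.sub_le_sub (le_rStar R p 0) le_rfl
      have h1 : ((1 * (∫ θ, p θ * (0 : Lp ℝ 2 μ) θ ∂μ - R 0 - ε) : ℝ) : EReal)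
          ≤ ((1 : ℝ) : EReal) * (S - (ε : EReal)) := by
        rw [EReal.coe_mul]
        exact mul_le_mul_of_nonneg_left h0 (by norm_num)
      calc (⊥ : EReal) < _ := EReal.bot_lt_coe (1 * (∫ θ, p θ * (0 : Lp ℝ 2 μ) θ ∂μ - R 0 - ε))
        _ ≤ ((1 : ℝ) : EReal) * (S - (ε : EReal)) := h1
        _ ≤ T := le_iSup (fun l : {l : ℝ // 0 < l} => (((l : ℝ) : EReal) * (S - (ε : EReal))))
            ⟨1, one_pos⟩
    have hmem : ∀ l : {l : ℝ // 0 < l}, ((a - g l : ℝ) : EReal) ≤ T := by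
      intro l
      have hl : (0 : ℝ) < (l : ℝ) := l.2
      have h1 : (((l : ℝ)⁻¹ * a - R (((l : ℝ))⁻¹ • X) : ℝ) : EReal) ≤ S := by
        have h := le_rStar R p (((l : ℝ))⁻¹ • X)
        rwa [pairing_smul] at h
      have h2 : (((l : ℝ)⁻¹ * a - R (((l : ℝ))⁻¹ • X) - ε : ℝ) : EReal) ≤ S - (ε : EReal) := by
        rw [show (((l : ℝ)⁻¹ * a - R (((l : ℝ))⁻¹ • X) - ε : ℝ) : EReal)
            = (((l : ℝ)⁻¹ * a - R (((l : ℝ))⁻¹ • X) : ℝ) : EReal) - (ε : EReal) by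
          rw [← EReal.coe_sub]]
        exact EReal.sub_le_sub h1 le_rfl
      calc ((a - g l : ℝ) : EReal)
          = (((l : ℝ) * ((l : ℝ)⁻¹ * a - R (((l : ℝ))⁻¹ • X) - ε) : ℝ) : EReal) := by
            norm_cast
            rw [hg]
            field_simp
            ring
        _ = ((l : ℝ) : EReal) * (((l : ℝ)⁻¹ * a - R (((l : ℝ))⁻¹ • X) - ε : ℝ) : EReal) :=
            EReal.coe_mul _ _
        _ ≤ ((l : ℝ) : EReal) * (S - (ε : EReal)) :=
            mul_le_mul_of_nonneg_left h2 (by exact_mod_cast hl.le)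
        _ ≤ T := le_iSup (fun l : {l : ℝ // 0 < l} => (((l : ℝ) : EReal) * (S - (ε : EReal)))) l
    -- now: (a : EReal) - rEps μ R ε X ≤ T
    have hrEps : rEps μ R ε X = ⨅ l : {l : ℝ // 0 < l}, ((g l : ℝ) : EReal) := rfl
    rw [hrEps]
    set I := ⨅ l : {l : ℝ // 0 < l}, ((g l : ℝ) : EReal) with hI
    refine le_of_forall_lt fun c hc => ?_
    induction c with
    | bot => exact hbotT
    | top => exact absurd (hc.trans_le le_top) (lt_irrefl _)
    | coe c =>
      have hIlt : I < ((a - c : ℝ) : EReal) := by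
        rcases eq_or_ne I ⊥ with hb | hb
        · rw [hb]; exact EReal.bot_lt_coe _
        · have hIt : I ≠ ⊤ := by
            intro ht
            have := iInf_le (fun l : {l : ℝ // 0 < l} => ((g l : ℝ) : EReal)) ⟨1, one_pos⟩
            rw [← hI, ht, top_le_iff] at this
            exact EReal.coe_ne_top _ this
          have hIr : ((I.toReal : ℝ) : EReal) = I := EReal.coe_toReal hIt hb
          rw [← hIr] at hc ⊢
          rw [← EReal.coe_sub] at hc
          rw [EReal.coe_lt_coe_iff] at hc ⊢
          linarith
      obtain ⟨l, hl⟩ := iInf_lt_iff.1 hIlt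
      have hgl : g l < a - c := by exact_mod_cast hl
      have : ((c : ℝ) : EReal) < ((a - g l : ℝ) : EReal) := by
        rw [EReal.coe_lt_coe_iff]; linarith
      exact this.trans_le (hmem l)
  · -- T ≤ rEpsStar
    refine iSup_le fun l => ?_
    have hl : (0 : ℝ) < (l : ℝ) := l.2
    rcases eq_or_ne S ⊤ with htop | hne
    · rw [htop, EReal.top_sub_coe, EReal.coe_mul_top_of_pos hl]
      rw [top_le_iff, eq_top_iff]
      refine le_of_forall_lt fun c hc => ?_
      induction c with
      | bot => exact bot_lt_rEpsStar R ε p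
      | top => exact absurd hc (lt_irrefl _)
      | coe c =>
        have : ((c + ε : ℝ) : EReal) < S := by rw [htop]; exact EReal.coe_lt_top _
        rw [hS, rStar, lt_iSup_iff] at this
        obtain ⟨Y, hY⟩ := this
        have hY' : c + ε < ∫ θ, p θ * Y θ ∂μ - R Y := by exact_mod_cast hY
        have h1 : ((c : ℝ) : EReal)
            < ((1 * ((∫ θ, p θ * Y θ ∂μ) - R Y - ε) : ℝ) : EReal) := by
          rw [EReal.coe_lt_coe_iff]; linarith
        exact h1.trans_le (rEpsStar_ge R ε p Y one_pos)
    · have hSr : ((S.toReal : ℝ) : EReal) = S := EReal.coe_toReal hne hSbot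
      set r := S.toReal with hr
      rw [← hSr, ← EReal.coe_sub, ← EReal.coe_mul]
      refine le_of_forall_lt fun c hc => ?_
      induction c with
      | bot => exact bot_lt_rEpsStar R ε p
      | top => exact absurd (hc.trans_le le_top) (lt_irrefl _)
      | coe c =>
        have hc' : c < (l : ℝ) * (r - ε) := by exact_mod_cast hc
        set δ := ((l : ℝ) * (r - ε) - c) / (l : ℝ) with hδ
        have hδpos : 0 < δ := div_pos (by linarith) hl
        have : ((r - δ : ℝ) : EReal) < S := by
          rw [← hSr, EReal.coe_lt_coe_iff]; linarith
        rw [hS, rStar, lt_iSup_iff] at this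
        obtain ⟨Y, hY⟩ := this
        have hY' : r - δ < ∫ θ, p θ * Y θ ∂μ - R Y := by exact_mod_cast hY
        have h1 : ((c : ℝ) : EReal)
            < (((l : ℝ) * ((∫ θ, p θ * Y θ ∂μ) - R Y - ε) : ℝ) : EReal) := by
          rw [EReal.coe_lt_coe_iff]
          have hld : (l : ℝ) * δ = (l : ℝ) * (r - ε) - c := by
            rw [hδ]; field_simp
          nlinarith
        exact h1.trans_le (rEpsStar_ge R ε p Y hl)

end Key

section Parts

variable {Θ : Type*} [MeasurableSpace Θ] {μ : Measure Θ}

lemma rEpsStar_of_le (R : Lp ℝ 2 μ → ℝ) (ε : ℝ) (p : Lp ℝ 2 μ)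
    (h : rStar μ R p ≤ (ε : EReal)) : rEpsStar μ R ε p = 0 := by
  have hSbot : rStar μ R p ≠ ⊥ := rStar_ne_bot R p
  have hSt : rStar μ R p ≠ ⊤ := fun ht => by
    rw [ht, top_le_iff] at h; exact EReal.coe_ne_top _ h
  set r := (rStar μ R p).toReal with hr
  have hSr : ((r : ℝ) : EReal) = rStar μ R p := EReal.coe_toReal hSt hSbot
  have hrε : r ≤ ε := by rw [← hSr] at h; exact_mod_cast h
  rw [rEpsStar_eq R ε p]
  simp only [← hSr, ← EReal.coe_sub, ← EReal.coe_mul]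
  apply le_antisymm
  · refine iSup_le fun l => ?_
    have hl : (0 : ℝ) < (l : ℝ) := l.2
    have : ((l : ℝ) * (r - ε) : ℝ) ≤ 0 := by nlinarith
    exact_mod_cast EReal.coe_le_coe_iff.2 this
  · refine le_of_forall_lt fun c hc => ?_
    induction c with
    | bot =>
      exact lt_of_lt_of_le (EReal.bot_lt_coe _)
        (le_iSup (fun l : {l : ℝ // 0 < l} => (((l : ℝ) * (r - ε) : ℝ) : EReal)) ⟨1, one_pos⟩)
    | top => exact absurd (hc.trans_le le_top) (lt_irrefl _)
    | coe c =>
      have hc' : c < 0 := by exact_mod_cast hc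
      set l₀ : ℝ := (-c) / (ε - r + 1) with hl₀
      have h1 : (0 : ℝ) < ε - r + 1 := by linarith
      have hl₀pos : 0 < l₀ := div_pos (by linarith) h1
      have hterm : c < l₀ * (r - ε) := by
        rw [hl₀, div_mul_eq_mul_div, lt_div_iff₀ h1]
        nlinarith
      calc ((c : ℝ) : EReal) < ((l₀ * (r - ε) : ℝ) : EReal) := EReal.coe_lt_coe_iff.2 hterm
        _ ≤ _ := le_iSup (fun l : {l : ℝ // 0 < l} => (((l : ℝ) * (r - ε) : ℝ) : EReal))
            ⟨l₀, hl₀pos⟩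

lemma rEpsStar_of_lt (R : Lp ℝ 2 μ → ℝ) (ε : ℝ) (p : Lp ℝ 2 μ)
    (h : (ε : EReal) < rStar μ R p) : rEpsStar μ R ε p = ⊤ := by
  rw [rEpsStar_eq R ε p, eq_top_iff]
  rcases eq_or_ne (rStar μ R p) ⊤ with htop | hne
  · have h1 : ((1 : ℝ) : EReal) * (rStar μ R p - (ε : EReal)) = ⊤ := by
      rw [htop, EReal.top_sub_coe, EReal.coe_mul_top_of_pos one_pos]
    calc (⊤ : EReal) = _ := h1.symm
      _ ≤ _ := le_iSup (fun l : {l : ℝ // 0 < l} =>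
          (((l : ℝ) : EReal) * (rStar μ R p - (ε : EReal)))) ⟨1, one_pos⟩
  · have hSbot : rStar μ R p ≠ ⊥ := rStar_ne_bot R p
    set r := (rStar μ R p).toReal with hr
    have hSr : ((r : ℝ) : EReal) = rStar μ R p := EReal.coe_toReal hne hSbot
    have hrε : ε < r := by rw [← hSr] at h; exact_mod_cast h
    refine le_of_forall_lt fun c hc => ?_
    induction c with
    | bot =>
      refine lt_of_lt_of_le (EReal.bot_lt_coe (1 * (r - ε))) ?_
      rw [EReal.coe_mul, EReal.coe_sub, hSr]
      exact le_iSup (fun l : {l : ℝ // 0 < l} =>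
        (((l : ℝ) : EReal) * (rStar μ R p - (ε : EReal)))) ⟨1, one_pos⟩
    | top => exact absurd hc (lt_irrefl _)
    | coe c =>
      set l₀ : ℝ := (|c| + 1) / (r - ε) with hl₀
      have hl₀pos : 0 < l₀ := div_pos (by positivity) (by linarith)
      have hterm : c < l₀ * (r - ε) := by
        rw [hl₀, div_mul_cancel₀ _ (by linarith : r - ε ≠ 0)]
        have := le_abs_self c
        linarith
      have h2 : ((c : ℝ) : EReal) < ((l₀ : ℝ) : EReal) * (rStar μ R p - (ε : EReal)) := by
        rw [← hSr, ← EReal.coe_sub, ← EReal.coe_mul]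
        exact_mod_cast hterm
      exact h2.trans_le (le_iSup (fun l : {l : ℝ // 0 < l} =>
        (((l : ℝ) : EReal) * (rStar μ R p - (ε : EReal)))) ⟨l₀, hl₀pos⟩)

end Parts

section Neg

variable {Θ : Type*} [MeasurableSpace Θ] {μ : Measure Θ}

lemma rStar_unbounded_of_neg [IsFiniteMeasure μ] (R : Lp ℝ 2 μ → ℝ)
    (hmono : ∀ X Y : Lp ℝ 2 μ, (⇑X ≤ᵐ[μ] ⇑Y) → R X ≤ R Y)
    (p : Lp ℝ 2 μ) (hneg : ¬ ((fun _ => (0 : ℝ)) ≤ᵐ[μ] ⇑p)) (M : ℝ) :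
    ((M : ℝ) : EReal) < rStar μ R p := by
  rw [Filter.EventuallyLE, ae_iff] at hneg
  simp only [not_le] at hneg
  have hex : ∃ n : ℕ, μ {θ | p θ ≤ -(1 / ((n : ℝ) + 1))} ≠ 0 := by
    by_contra h
    push_neg at h
    apply hneg
    refine measure_mono_null ?_ (measure_iUnion_null h)
    intro θ hθ
    have hθ' : (0 : ℝ) < -p θ := by
      simp only [Set.mem_setOf_eq] at hθ; linarith
    obtain ⟨n, hn⟩ := exists_nat_one_div_lt hθ'
    exact Set.mem_iUnion.2 ⟨n, by simp only [Set.mem_setOf_eq]; linarith⟩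
  obtain ⟨n, hA⟩ := hex
  set δ : ℝ := 1 / ((n : ℝ) + 1) with hδdef
  have hδ : 0 < δ := by positivity
  set A : Set Θ := {θ | p θ ≤ -δ} with hAdef
  have hAmeas : MeasurableSet A := (Lp.stronglyMeasurable p).measurable measurableSet_Iic
  have hAfin : μ A ≠ ⊤ := measure_ne_top μ A
  set m : ℝ := (μ A).toReal with hmdef
  have hm : 0 < m := ENNReal.toReal_pos hA hAfin
  set t : ℝ := (|M + R 0| + 1) / (δ * m) with htdef
  have ht : 0 < t := by positivity
  set X : Lp ℝ 2 μ := indicatorConstLp 2 hAmeas hAfin (-t) with hXdef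
  have hXle : ⇑X ≤ᵐ[μ] ⇑(0 : Lp ℝ 2 μ) := by
    filter_upwards [indicatorConstLp_coeFn (μ := μ) (p := 2) (hs := hAmeas)
      (hμs := hAfin) (c := (-t : ℝ)), Lp.coeFn_zero ℝ 2 μ] with θ h1 h2
    rw [hXdef, h1, h2]
    by_cases hθ : θ ∈ A
    · simp only [Set.indicator_of_mem hθ, Pi.zero_apply]; linarith
    · simp [Set.indicator_of_notMem hθ]
  have hRX : R X ≤ R 0 := hmono X 0 hXle
  have hpInt : Integrable (⇑p) μ :=
    memLp_one_iff_integrable.1 ((Lp.memLp p).mono_exponent (by norm_num))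
  have hint : ∫ θ, p θ * X θ ∂μ = (∫ θ in A, p θ ∂μ) * (-t) := by
    calc ∫ θ, p θ * X θ ∂μ
        = ∫ θ, A.indicator (fun θ => p θ * (-t)) θ ∂μ := by
          refine integral_congr_ae ?_
          filter_upwards [indicatorConstLp_coeFn (μ := μ) (p := 2) (hs := hAmeas)
            (hμs := hAfin) (c := (-t : ℝ))] with θ h1
          rw [hXdef, h1]
          by_cases hθ : θ ∈ A
          · simp [Set.indicator_of_mem hθ]
          · simp [Set.indicator_of_notMem hθ]
      _ = ∫ θ in A, p θ * (-t) ∂μ := integral_indicator hAmeas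
      _ = (∫ θ in A, p θ ∂μ) * (-t) := integral_mul_const _ _
  have hsA : ∫ θ in A, p θ ∂μ ≤ -δ * m := by
    have h1 : ∫ θ in A, p θ ∂μ ≤ ∫ θ in A, (-δ : ℝ) ∂μ :=
      setIntegral_mono_on hpInt.integrableOn
        (integrableOn_const (measure_lt_top μ A).ne) hAmeas (fun θ hθ => hθ)
    rwa [setIntegral_const, smul_eq_mul, mul_comm, measureReal_def] at h1
  have hpair : t * (δ * m) ≤ (∫ θ in A, p θ ∂μ) * (-t) := by nlinarith
  have htδm : t * (δ * m) = |M + R 0| + 1 := by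
    rw [htdef]; field_simp
  have hb : M < ∫ θ, p θ * X θ ∂μ - R X := by
    have habs := le_abs_self (M + R 0)
    rw [hint]
    linarith
  exact lt_of_lt_of_le (EReal.coe_lt_coe_iff.2 hb) (le_rStar R p X)

end Neg

/-- for a convex (monotone, translation-equivariant) risk measure
`R` whose conjugate equals `Φ` on `{⟨p,1⟩ = 1}` and `+∞` elsewhere, the
conjugate of `R^ε(X) = inf_{λ>0}(λε + λR(X/λ))` is
`(R^ε)*(p) = sup_{λ>0} λ(R*(p) − ε)`; hence it is `0` if `R*(p) ≤ ε` and `+∞`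
otherwise, and the risk envelope of `R^ε` is
`{p : Φ(p) ≤ ε, E[p] = 1, p ≥ 0}`. -/
theorem rEps_conjugate_and_risk_envelope {Θ : Type*} [MeasurableSpace Θ]
    (μ : Measure Θ) [IsProbabilityMeasure μ]
    (R : Lp ℝ 2 μ → ℝ)
    (hconv : ConvexOn ℝ Set.univ R)
    (hmono : ∀ X Y : Lp ℝ 2 μ, (⇑X ≤ᵐ[μ] ⇑Y) → R X ≤ R Y)
    (htrans : ∀ (X : Lp ℝ 2 μ) (c : ℝ), R (X + c • oneLp μ) = R X + c)
    (Φ : Lp ℝ 2 μ → EReal)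
    (hΦ : ∀ p : Lp ℝ 2 μ,
      ((∫ θ, p θ ∂μ = 1) → rStar μ R p = Φ p) ∧
      ((∫ θ, p θ ∂μ ≠ 1) → rStar μ R p = ⊤))
    (ε : ℝ) (hε : 0 ≤ ε) :
    (∀ p : Lp ℝ 2 μ,
        rEpsStar μ R ε p
          = ⨆ l : {l : ℝ // 0 < l}, (((l : ℝ) : EReal) * (rStar μ R p - (ε : EReal)))) ∧
    (∀ p : Lp ℝ 2 μ, rStar μ R p ≤ (ε : EReal) → rEpsStar μ R ε p = 0) ∧
    (∀ p : Lp ℝ 2 μ, (ε : EReal) < rStar μ R p → rEpsStar μ R ε p = ⊤) ∧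
    ({p : Lp ℝ 2 μ | rEpsStar μ R ε p ≠ ⊤}
      = {p : Lp ℝ 2 μ | Φ p ≤ (ε : EReal) ∧ (∫ θ, p θ ∂μ = 1) ∧
          (fun _ => (0 : ℝ)) ≤ᵐ[μ] ⇑p}) := by
  refine ⟨fun p => rEpsStar_eq R ε p, fun p => rEpsStar_of_le R ε p,
    fun p => rEpsStar_of_lt R ε p, ?_⟩
  ext p
  simp only [Set.mem_setOf_eq]
  constructor
  · intro hne
    have hle : rStar μ R p ≤ (ε : EReal) := by
      by_contra h
      exact hne (rEpsStar_of_lt R ε p (lt_of_not_ge h))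
    have h1 : ∫ θ, p θ ∂μ = 1 := by
      by_contra h'
      rw [(hΦ p).2 h'] at hle
      exact absurd hle (EReal.coe_lt_top ε).not_ge
    have hpos : (fun _ => (0 : ℝ)) ≤ᵐ[μ] ⇑p := by
      by_contra hneg
      exact absurd hle (rStar_unbounded_of_neg R hmono p hneg ε).not_ge
    refine ⟨?_, h1, hpos⟩
    rw [← (hΦ p).1 h1]
    exact hle
  · rintro ⟨hΦle, h1, -⟩
    have hle : rStar μ R p ≤ (ε : EReal) := by
      rw [(hΦ p).1 h1]
      exact hΦle
    rw [rEpsStar_of_le R ε p hle]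
    simp
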